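/- Let d ∈ ℕ, let D ⊆ ℝ^d be a nonempty convex set, let λ_i > 0, i ∈ ℕ, with ∑_{i=1}^∞ λ_i = 1, and let (x_i)_{i∈ℕ} be a bounded sequence in D. Then the series ∑_{i=1}^∞ λ_i x_i converges absolutely and its sum belongs to D. -/

import Mathlib

open scoped Topology
open Filter Set FiniteDimensional

section Aux

variable {E : Type*} [NormedAddCommGroup E] [NormedSpace ℝ E]

/-- Summability of the norms. -/
lemma aux_summable_norm (lam : ℕ → ℝ) (hpos : ∀ i, 0 < lam i) (hlsum : Summable lam)
    (x : ℕ → E) {K : ℝ} (hK : ∀ i, ‖x i‖ ≤ K) :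
    Summable (fun i => ‖lam i • x i‖) := by
  refine Summable.of_nonneg_of_le (fun i => norm_nonneg _) (fun i => ?_)
    (hlsum.mul_right K)
  rw [norm_smul, Real.norm_eq_abs, abs_of_pos (hpos i)]
  exact mul_le_mul_of_nonneg_left (hK i) (hpos i).le

/-- For a convex set with a point in its interior, the interior of the closure is
contained in the interior. -/
lemma aux_interior_closure {C : Set E} (hC : Convex ℝ C) {x₀ y : E}
    (hx₀ : x₀ ∈ interior C) (hy : y ∈ interior (closure C)) : y ∈ interior C := by
  obtain ⟨ε, hε, hball⟩ := Metric.isOpen_iff.1 isOpen_interior y hy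
  set t : ℝ := ε / (2 * (‖y - x₀‖ + 1)) with ht_def
  have hden : (0:ℝ) < 2 * (‖y - x₀‖ + 1) := by positivity
  have ht : 0 < t := div_pos hε hden
  set z : E := y + t • (y - x₀) with hz_def
  have hz : z ∈ closure C := by
    have hmem : z ∈ Metric.ball y ε := by
      have : ‖z - y‖ = t * ‖y - x₀‖ := by
        rw [hz_def]; simp [norm_smul, abs_of_pos ht]
      have hlt : t * ‖y - x₀‖ < ε := by
        rw [ht_def]
        rw [div_mul_eq_mul_div, div_lt_iff₀ hden]
        nlinarith [norm_nonneg (y - x₀)]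
      simpa [Metric.mem_ball, dist_eq_norm, this] using hlt
    exact interior_subset (hball hmem)
  have h1t : (0:ℝ) < 1 + t := by linarith
  have key : (t / (1 + t)) • x₀ + (1 / (1 + t)) • z = y := by
    rw [hz_def]
    match_scalars <;> (field_simp; try ring)
  have := hC.combo_interior_closure_mem_interior hx₀ hz
    (a := t / (1 + t)) (b := 1 / (1 + t)) (div_pos ht h1t)
    (by positivity) (by field_simp; try ring)
  rwa [key] at this

/-- If a continuous linear functional is `< u` on the interior of a convex set
with nonempty interior, then it is `≤ u` on the set. -/
lemma aux_le_on_set {C : Set E} (hC : Convex ℝ C) {x₀ : E} (hx₀ : x₀ ∈ interior C)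
    (f : E →L[ℝ] ℝ) {u : ℝ} (hf : ∀ a ∈ interior C, f a < u) {y : E} (hy : y ∈ C) :
    f y ≤ u := by
  have htend : Tendsto (fun t : ℝ => t * f x₀ + (1 - t) * f y) (𝓝[>] (0:ℝ))
      (𝓝 (f y)) := by
    have : Tendsto (fun t : ℝ => t * f x₀ + (1 - t) * f y) (𝓝 (0:ℝ))
        (𝓝 ((0:ℝ) * f x₀ + (1 - 0) * f y)) := by
      apply Continuous.tendsto
      continuity
    simpa using this.mono_left nhdsWithin_le_nhds
  refine le_of_tendsto htend ?_
  filter_upwards [Ioc_mem_nhdsGT_of_mem (by constructor <;> norm_num :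
      (0:ℝ) ∈ Ico (0:ℝ) 1)] with t ht
  have hmem : t • x₀ + (1 - t) • y ∈ interior C :=
    hC.combo_interior_self_mem_interior hx₀ hy ht.1 (by linarith [ht.2]) (by ring)
  have := hf _ hmem
  simpa [map_add, map_smul, smul_eq_mul] using this.le

end Aux

/-- Core lemma: in a finite-dimensional normed space, a convex series of a bounded
sequence sums into the convex hull of the range. Proof by induction on dimension. -/
lemma aux_core : ∀ (n : ℕ) (E : Type) [NormedAddCommGroup E]
    [NormedSpace ℝ E] [FiniteDimensional ℝ E],
    Module.finrank ℝ E ≤ n → ∀ (lam : ℕ → ℝ), (∀ i, 0 < lam i) → HasSum lam 1 →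
    ∀ (x : ℕ → E) (K : ℝ), (∀ i, ‖x i‖ ≤ K) →
    (∑' i, lam i • x i) ∈ convexHull ℝ (Set.range x) := by
  intro n
  induction n with
  | zero =>
    intro E _ _ _ hfr lam hpos hsum x K hK
    have : Subsingleton E := by
      rw [← Module.finrank_zero_iff (R := ℝ)]; omega
    have : (∑' i, lam i • x i) = x 0 := Subsingleton.elim _ _
    rw [this]
    exact subset_convexHull ℝ _ (Set.mem_range_self 0)
  | succ n ih =>
    intro E _ _ _ hfr lam hpos hsum x K hK
    classical
    -- summability facts
    have hlsum : Summable lam := hsum.summable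
    have hsn : Summable (fun i => ‖lam i • x i‖) := aux_summable_norm lam hpos hlsum x hK
    have hs2 : Summable (fun i => lam i • x i) := hsn.of_norm
    set s : E := ∑' i, lam i • x i with hs_def
    set C : Set E := convexHull ℝ (Set.range x) with hC_def
    have hCconv : Convex ℝ C := convex_convexHull ℝ _
    have hxC : ∀ i, x i ∈ C := fun i => subset_convexHull ℝ _ (Set.mem_range_self i)
    -- reduction to a proper subspace
    have reduce : ∀ p : Submodule ℝ E, p ≠ ⊤ → (∀ i, x i - x 0 ∈ p) → s ∈ C := by
      intro p hp hmem
      have hfrp : Module.finrank ℝ p ≤ n := by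
        have := Submodule.finrank_lt (K := ℝ) (V := E) hp
        omega
      set z : ℕ → p := fun i => ⟨x i - x 0, hmem i⟩ with hz_def
      have hKz : ∀ i, ‖z i‖ ≤ K + ‖x 0‖ := by
        intro i
        have : ‖z i‖ = ‖x i - x 0‖ := rfl
        rw [this]
        calc ‖x i - x 0‖ ≤ ‖x i‖ + ‖x 0‖ := norm_sub_le _ _
          _ ≤ K + ‖x 0‖ := by linarith [hK i]
      have hmain := ih p hfrp lam hpos hsum z _ hKz
      -- transfer back
      have hszn : Summable (fun i => ‖lam i • z i‖) :=
        aux_summable_norm lam hpos hlsum z hKz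
      have hsz : Summable (fun i => lam i • z i) := hszn.of_norm
      set t : p := ∑' i, lam i • z i with ht_def
      have hcoe : (t : E) = s - x 0 := by
        have h1 : (t : E) = ∑' i, lam i • (x i - x 0) := by
          have h := p.subtypeL.map_tsum hsz
          rw [ht_def]; simpa [hz_def] using h
        have h2 : Summable (fun i => lam i • x 0) := hlsum.smul_const (x 0)
        have h3 : (fun i => lam i • (x i - x 0)) =
            fun i => lam i • x i - lam i • x 0 := by
          funext i; rw [smul_sub]
        rw [h1, h3, Summable.tsum_sub hs2 h2, Summable.tsum_smul_const hlsum, hsum.tsum_eq, one_smul]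
      -- affine map y ↦ x 0 + y
      set A : p →ᵃ[ℝ] E :=
        (AffineEquiv.constVAdd ℝ E (x 0)).toAffineMap.comp p.subtype.toAffineMap
        with hA_def
      have hAt : A t = s := by
        have : A t = x 0 + (t : E) := rfl
        rw [this, hcoe]; abel
      have hAz : ⇑A ∘ z = x := by
        funext i
        show x 0 + (x i - x 0) = x i
        abel
      have himg : A '' convexHull ℝ (Set.range z) = convexHull ℝ (Set.range x) := by
        rw [AffineMap.image_convexHull, ← Set.range_comp, hAz]
      rw [hC_def, ← himg, ← hAt]
      exact Set.mem_image_of_mem A hmain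
    by_cases hspan : affineSpan ℝ (Set.range x) = ⊤
    · -- full-dimensional case: interior of C is nonempty
      have hint : (interior C).Nonempty := by
        rw [hCconv.interior_nonempty_iff_affineSpan_eq_top, hC_def,
          affineSpan_convexHull]
        exact hspan
      obtain ⟨x₀, hx₀⟩ := hint
      by_cases hsint : s ∈ interior (closure C)
      · exact interior_subset (aux_interior_closure hCconv hx₀ hsint)
      · -- separate s from interior C
        have hdisj : Disjoint (interior C) {s} := by
          rw [Set.disjoint_singleton_right]
          intro h
          exact hsint (interior_mono subset_closure h)
        obtain ⟨f, u, hfu, hus⟩ := geometric_hahn_banach_open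
          (hCconv.interior) isOpen_interior (convex_singleton s) hdisj
        have hus' : u ≤ f s := hus s rfl
        have hle : ∀ i, f (x i) ≤ u := fun i =>
          aux_le_on_set hCconv hx₀ f hfu (hxC i)
        -- f (x i) = u for all i
        have hsumf : Summable (fun i => lam i * f (x i)) := by
          have : (fun i => lam i * f (x i)) = fun i => f (lam i • x i) := by
            funext i; rw [map_smul]; rfl
          rw [this]
          exact hs2.mapL f
        have hfs : f s = ∑' i, lam i * f (x i) := by
          rw [hs_def, f.map_tsum hs2]
          congr 1; funext i; rw [map_smul]; rfl
        have hsum0 : Summable (fun i => lam i * (u - f (x i))) := by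
          have : (fun i => lam i * (u - f (x i))) =
              fun i => lam i * u - lam i * f (x i) := by funext i; ring
          rw [this]
          exact (hlsum.mul_right u).sub hsumf
        have htsum0 : (∑' i, lam i * (u - f (x i))) ≤ 0 := by
          have : (∑' i, lam i * (u - f (x i))) = u - f s := by
            have heq : (fun i => lam i * (u - f (x i))) =
                fun i => lam i * u - lam i * f (x i) := by funext i; ring
            rw [heq, Summable.tsum_sub (hlsum.mul_right u) hsumf,
              tsum_mul_right, hsum.tsum_eq, one_mul, hfs]
          rw [this]; linarith
        have heq : ∀ i, f (x i) = u := by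
          intro i
          have hterm : lam i * (u - f (x i)) ≤ ∑' j, lam j * (u - f (x j)) :=
            Summable.le_tsum hsum0 i (fun j _ => by
              have := hle j
              have := (hpos j).le
              nlinarith)
          have h1 : lam i * (u - f (x i)) ≤ 0 := le_trans hterm htsum0
          have h2 : 0 ≤ u - f (x i) := by linarith [hle i]
          nlinarith [hpos i]
        -- f is not zero: the kernel is proper
        have hker : LinearMap.ker (f : E →ₗ[ℝ] ℝ) ≠ ⊤ := by
          intro h
          have hx₀0 : f x₀ = 0 := by
            have : x₀ ∈ LinearMap.ker (f : E →ₗ[ℝ] ℝ) := h ▸ Submodule.mem_top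
            exact this
          have hfu' := hfu x₀ hx₀
          have hx00 : f (x 0) = 0 := by
            have : x 0 ∈ LinearMap.ker (f : E →ₗ[ℝ] ℝ) := h ▸ Submodule.mem_top
            exact this
          rw [hx₀0] at hfu'
          rw [heq 0] at hx00
          linarith
        refine reduce (LinearMap.ker (f : E →ₗ[ℝ] ℝ)) hker (fun i => ?_)
        have : f (x i - x 0) = 0 := by
          rw [map_sub, heq i, heq 0, sub_self]
        exact this
    · -- degenerate case: points lie in a proper affine subspace
      have hne : (Set.range x).Nonempty := ⟨x 0, Set.mem_range_self 0⟩
      have hdir : (affineSpan ℝ (Set.range x)).direction ≠ ⊤ := by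
        intro h
        exact hspan (AffineSubspace.direction_eq_top_iff_of_nonempty
          ⟨x 0, subset_affineSpan ℝ _ (Set.mem_range_self 0)⟩ |>.1 h)
      refine reduce _ hdir (fun i => ?_)
      exact AffineSubspace.vsub_mem_direction
        (subset_affineSpan ℝ _ (Set.mem_range_self i))
        (subset_affineSpan ℝ _ (Set.mem_range_self 0))

/-- For positive weights `λ_i` with `∑ λ_i = 1` and a bounded sequence `(x_i)` in a
nonempty convex `D ⊆ ℝ^d`, the series `∑ λ_i x_i` converges absolutely and its sum
belongs to `D`. -/
theorem stmt_9 (d : ℕ) (D : Set (EuclideanSpace ℝ (Fin d))) (hne : D.Nonempty)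
    (hD : Convex ℝ D) (lam : ℕ → ℝ) (hpos : ∀ i, 0 < lam i) (hsum : HasSum lam 1)
    (x : ℕ → EuclideanSpace ℝ (Fin d)) (hx : ∀ i, x i ∈ D)
    (hbdd : ∃ K > (0 : ℝ), ∀ i, ‖x i‖ ≤ K) :
    Summable (fun i => ‖lam i • x i‖) ∧ Summable (fun i => lam i • x i) ∧
      (∑' i, lam i • x i) ∈ D := by
  obtain ⟨K, hK0, hK⟩ := hbdd
  have hsn : Summable (fun i => ‖lam i • x i‖) :=
    aux_summable_norm lam hpos hsum.summable x hK
  refine ⟨hsn, hsn.of_norm, ?_⟩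
  have hcore := aux_core (Module.finrank ℝ (EuclideanSpace ℝ (Fin d)))
    (EuclideanSpace ℝ (Fin d)) le_rfl lam hpos hsum x K hK
  exact convexHull_min (Set.range_subset_iff.2 hx) hD hcore
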